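/- Let c₁, c₂, c₃ be real numbers with C = max(|c₁|,|c₂|,|c₃|) ≤ 1. For all unit vectors z, z⁰, z¹ in ℝ³, setting φ₀ = (c₁z₁z₁⁰)²+(c₂z₂z₂⁰)²+(c₃z₃z₃⁰)² and φ₁ = (c₁z₁z₁¹)²+(c₂z₂z₂¹)²+(c₃z₃z₃¹)², one has (1/4)·[H(√φ₀) + H(√φ₁)] ≤ (1/2)·H(C), and equality is attained for a suitable choice of unit vectors. Hence the maximum of (1/4)·[H(√φ₀)+H(√φ₁)] over all triples of unit vectors equals (1/2)·H(C). -/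

import Mathlib

/-- `H(x) = (1+x)·log₂(1+x) + (1−x)·log₂(1−x)`. -/
noncomputable def Hf (x : ℝ) : ℝ :=
  (1 + x) * Real.logb 2 (1 + x) + (1 - x) * Real.logb 2 (1 - x)

/-- A unit vector in `ℝ³`: a triple with `z₁²+z₂²+z₃² = 1`. -/
def IsUnitVec (v : ℝ × ℝ × ℝ) : Prop := v.1 ^ 2 + v.2.1 ^ 2 + v.2.2 ^ 2 = 1

/-- `φ = (c₁z₁w₁)² + (c₂z₂w₂)² + (c₃z₃w₃)²`. -/
noncomputable def phi (c₁ c₂ c₃ : ℝ) (z w : ℝ × ℝ × ℝ) : ℝ :=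
  (c₁ * z.1 * w.1) ^ 2 + (c₂ * z.2.1 * w.2.1) ^ 2 + (c₃ * z.2.2 * w.2.2) ^ 2

noncomputable def gaux (x : ℝ) : ℝ :=
  (1 + x) * Real.log (1 + x) + (1 - x) * Real.log (1 - x)

lemma gaux_cont : Continuous gaux := by
  have h := Real.continuous_mul_log
  exact ((h.comp (continuous_const.add continuous_id)).add
    (h.comp (continuous_const.sub continuous_id)))

lemma gaux_deriv {x : ℝ} (hx : x ∈ Set.Ioo (0:ℝ) 1) :
    HasDerivAt gaux (Real.log (1 + x) - Real.log (1 - x)) x := by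
  obtain ⟨h0, h1⟩ := hx
  have h1p : (1:ℝ) + x ≠ 0 := by linarith
  have h1m : (1:ℝ) - x ≠ 0 := by linarith
  have d1 : HasDerivAt (fun y : ℝ => (1 + y) * Real.log (1 + y))
      ((Real.log (1 + x) + 1) * 1) x := by
    have := (Real.hasDerivAt_mul_log h1p).comp x
      ((hasDerivAt_const x (1:ℝ)).add (hasDerivAt_id x))
    simpa [Function.comp_def] using this
  have d2 : HasDerivAt (fun y : ℝ => (1 - y) * Real.log (1 - y))
      ((Real.log (1 - x) + 1) * (-1)) x := by
    have := (Real.hasDerivAt_mul_log h1m).comp x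
      ((hasDerivAt_const x (1:ℝ)).sub (hasDerivAt_id x))
    simpa [Function.comp_def] using this
  have := d1.add d2
  rw [show Real.log (1 + x) - Real.log (1 - x) =
    (Real.log (1 + x) + 1) * 1 + (Real.log (1 - x) + 1) * (-1) by ring]
  exact this

lemma gaux_mono : MonotoneOn gaux (Set.Icc (0:ℝ) 1) := by
  apply monotoneOn_of_deriv_nonneg (convex_Icc 0 1) gaux_cont.continuousOn
  · intro x hx
    rw [interior_Icc] at hx
    exact (gaux_deriv hx).differentiableAt.differentiableWithinAt
  · intro x hx
    rw [interior_Icc] at hx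
    rw [(gaux_deriv hx).deriv]
    have : Real.log (1 - x) ≤ Real.log (1 + x) :=
      Real.log_le_log (by linarith [hx.2]) (by linarith [hx.1])
    linarith

lemma Hf_eq (x : ℝ) : Hf x = gaux x / Real.log 2 := by
  unfold Hf gaux Real.logb
  ring

lemma Hf_mono : MonotoneOn Hf (Set.Icc (0:ℝ) 1) := by
  intro a ha b hb hab
  rw [Hf_eq, Hf_eq]
  have h2 : (0:ℝ) < Real.log 2 := Real.log_pos one_lt_two
  gcongr
  exact gaux_mono ha hb hab

lemma phi_le_sq (c₁ c₂ c₃ C : ℝ) (h1 : |c₁| ≤ C) (h2 : |c₂| ≤ C) (h3 : |c₃| ≤ C)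
    (z w : ℝ × ℝ × ℝ) (hz : IsUnitVec z) (hw : IsUnitVec w) :
    phi c₁ c₂ c₃ z w ≤ C ^ 2 := by
  obtain ⟨z1, z2, z3⟩ := z
  obtain ⟨w1, w2, w3⟩ := w
  simp only [IsUnitVec] at hz hw
  have hc1 : c₁ ^ 2 ≤ C ^ 2 := by nlinarith [abs_nonneg c₁, sq_abs c₁]
  have hc2 : c₂ ^ 2 ≤ C ^ 2 := by nlinarith [abs_nonneg c₂, sq_abs c₂]
  have hc3 : c₃ ^ 2 ≤ C ^ 2 := by nlinarith [abs_nonneg c₃, sq_abs c₃]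
  have hw1 : w1 ^ 2 ≤ 1 := by nlinarith [sq_nonneg w2, sq_nonneg w3]
  have hw2 : w2 ^ 2 ≤ 1 := by nlinarith [sq_nonneg w1, sq_nonneg w3]
  have hw3 : w3 ^ 2 ≤ 1 := by nlinarith [sq_nonneg w1, sq_nonneg w2]
  simp only [phi]
  have t1 : (c₁ * z1 * w1) ^ 2 ≤ C ^ 2 * z1 ^ 2 := by
    nlinarith [mul_nonneg (sub_nonneg.2 hc1) (sq_nonneg z1),
      mul_nonneg (mul_nonneg (sq_nonneg c₁) (sq_nonneg z1)) (sub_nonneg.2 hw1)]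
  have t2 : (c₂ * z2 * w2) ^ 2 ≤ C ^ 2 * z2 ^ 2 := by
    nlinarith [mul_nonneg (sub_nonneg.2 hc2) (sq_nonneg z2),
      mul_nonneg (mul_nonneg (sq_nonneg c₂) (sq_nonneg z2)) (sub_nonneg.2 hw2)]
  have t3 : (c₃ * z3 * w3) ^ 2 ≤ C ^ 2 * z3 ^ 2 := by
    nlinarith [mul_nonneg (sub_nonneg.2 hc3) (sq_nonneg z3),
      mul_nonneg (mul_nonneg (sq_nonneg c₃) (sq_nonneg z3)) (sub_nonneg.2 hw3)]
  nlinarith [t1, t2, t3]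

/-- With `C = max(|c₁|,|c₂|,|c₃|) ≤ 1`: `(1/4)[H(√φ₀)+H(√φ₁)] ≤ (1/2)H(C)` for all triples of
unit vectors, with equality attained; hence the maximum equals `(1/2)H(C)`. -/
theorem stmt_9 (c₁ c₂ c₃ C : ℝ) (hC : C = max |c₁| (max |c₂| |c₃|)) (hC1 : C ≤ 1) :
    (∀ z z0 z1 : ℝ × ℝ × ℝ, IsUnitVec z → IsUnitVec z0 → IsUnitVec z1 →
        (1 / 4) * (Hf (Real.sqrt (phi c₁ c₂ c₃ z z0)) + Hf (Real.sqrt (phi c₁ c₂ c₃ z z1)))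
          ≤ (1 / 2) * Hf C) ∧
    (∃ z z0 z1 : ℝ × ℝ × ℝ, IsUnitVec z ∧ IsUnitVec z0 ∧ IsUnitVec z1 ∧
        (1 / 4) * (Hf (Real.sqrt (phi c₁ c₂ c₃ z z0)) + Hf (Real.sqrt (phi c₁ c₂ c₃ z z1)))
          = (1 / 2) * Hf C) ∧
    IsGreatest {y : ℝ | ∃ z z0 z1 : ℝ × ℝ × ℝ,
        IsUnitVec z ∧ IsUnitVec z0 ∧ IsUnitVec z1 ∧
        y = (1 / 4) * (Hf (Real.sqrt (phi c₁ c₂ c₃ z z0))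
              + Hf (Real.sqrt (phi c₁ c₂ c₃ z z1)))} ((1 / 2) * Hf C) := by
  have hc1 : |c₁| ≤ C := hC ▸ le_max_left _ _
  have hc2 : |c₂| ≤ C := hC ▸ le_trans (le_max_left _ _) (le_max_right _ _)
  have hc3 : |c₃| ≤ C := hC ▸ le_trans (le_max_right _ _) (le_max_right _ _)
  have hC0 : 0 ≤ C := le_trans (abs_nonneg c₁) hc1
  have hCmem : C ∈ Set.Icc (0:ℝ) 1 := ⟨hC0, hC1⟩
  -- upper bound part
  have hub : ∀ z z0 z1 : ℝ × ℝ × ℝ, IsUnitVec z → IsUnitVec z0 → IsUnitVec z1 →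
      (1 / 4) * (Hf (Real.sqrt (phi c₁ c₂ c₃ z z0)) + Hf (Real.sqrt (phi c₁ c₂ c₃ z z1)))
        ≤ (1 / 2) * Hf C := by
    intro z z0 z1 hz hz0 hz1
    have key : ∀ w : ℝ × ℝ × ℝ, IsUnitVec w →
        Hf (Real.sqrt (phi c₁ c₂ c₃ z w)) ≤ Hf C := by
      intro w hw
      have hle : phi c₁ c₂ c₃ z w ≤ C ^ 2 := phi_le_sq c₁ c₂ c₃ C hc1 hc2 hc3 z w hz hw
      have hs : Real.sqrt (phi c₁ c₂ c₃ z w) ≤ C := by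
        calc Real.sqrt (phi c₁ c₂ c₃ z w) ≤ Real.sqrt (C ^ 2) := Real.sqrt_le_sqrt hle
        _ = C := by rw [Real.sqrt_sq hC0]
      exact Hf_mono ⟨Real.sqrt_nonneg _, le_trans hs hC1⟩ hCmem hs
    linarith [key z0 hz0, key z1 hz1]
  have heq : ∃ z z0 z1 : ℝ × ℝ × ℝ, IsUnitVec z ∧ IsUnitVec z0 ∧ IsUnitVec z1 ∧
      (1 / 4) * (Hf (Real.sqrt (phi c₁ c₂ c₃ z z0)) + Hf (Real.sqrt (phi c₁ c₂ c₃ z z1)))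
        = (1 / 2) * Hf C := by
    have hwit : ∃ v : ℝ × ℝ × ℝ, IsUnitVec v ∧ phi c₁ c₂ c₃ v v = C ^ 2 := by
      rcases max_cases |c₁| (max |c₂| |c₃|) with ⟨h, _⟩ | ⟨h, _⟩
      · exact ⟨(1, 0, 0), by simp [IsUnitVec], by
          simp [phi]; rw [hC, h, ← sq_abs]⟩
      · rcases max_cases |c₂| |c₃| with ⟨h', _⟩ | ⟨h', _⟩
        · exact ⟨(0, 1, 0), by simp [IsUnitVec], by
            simp [phi]; rw [hC, h, h', ← sq_abs]⟩
        · exact ⟨(0, 0, 1), by simp [IsUnitVec], by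
            simp [phi]; rw [hC, h, h', ← sq_abs]⟩
    obtain ⟨v, hv, hpv⟩ := hwit
    refine ⟨v, v, v, hv, hv, hv, ?_⟩
    rw [hpv, Real.sqrt_sq hC0]
    ring
  refine ⟨hub, heq, ?_, ?_⟩
  · obtain ⟨z, z0, z1, h1, h2, h3, h4⟩ := heq
    exact ⟨z, z0, z1, h1, h2, h3, h4.symm⟩
  · rintro y ⟨z, z0, z1, h1, h2, h3, rfl⟩
    exact hub z z0 z1 h1 h2 h3
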